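/- arXiv:2001.02711 — 2 statements merged into one kernel-verified Lean document; each statement's English description precedes it below -/
import Mathlib

section
/- Let f : ℝ → ℝ be nonnegative, integrable, supported in the interval I = (π/4, 3π/4), with total mass ρ₊ = ∫_I f dφ > 0 and mean φ₊ = (1/ρ₊)∫_I φ f dφ. Then the double integral ∫_I ∫_I |sin(φ-φ*)| f(φ) f(φ*) (φ-φ*)² dφ* dφ is bounded below by (2√ρ₊/π)·V^{3/2}, where V = ∫_I (φ-φ₊)² f dφ. -/
open MeasureTheory Set

private lemma sin_lb' {t : ℝ} (ht : |t| ≤ Real.pi/2) : 2/Real.pi * |t| ≤ |Real.sin t| := by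
  refine (Real.mul_le_sin (abs_nonneg t) ht).trans ?_
  rcases abs_choice t with h | h
  · rw [h]; exact le_abs_self _
  · rw [h, Real.sin_neg]; exact neg_le_abs _


theorem stmt_3 (f : ℝ → ℝ) (hf_nonneg : ∀ x, 0 ≤ f x)
    (hf_int : IntegrableOn f (Ioo (Real.pi/4) (3*Real.pi/4)))
    (hf_supp : ∀ x ∉ Ioo (Real.pi/4) (3*Real.pi/4), f x = 0)
    (ρ : ℝ) (hρ_def : ρ = ∫ x in Ioo (Real.pi/4) (3*Real.pi/4), f x) (hρ : 0 < ρ)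
    (φp : ℝ) (hφp : φp = (∫ x in Ioo (Real.pi/4) (3*Real.pi/4), x * f x) / ρ)
    (V : ℝ) (hV : V = ∫ x in Ioo (Real.pi/4) (3*Real.pi/4), (x - φp)^2 * f x) :
    (2 * Real.sqrt ρ / Real.pi) * V ^ ((3:ℝ)/2) ≤
      ∫ x in Ioo (Real.pi/4) (3*Real.pi/4), ∫ y in Ioo (Real.pi/4) (3*Real.pi/4),
        |Real.sin (x - y)| * f x * f y * (x - y)^2 := by
  have pi_pos := Real.pi_pos
  have pi_le := Real.pi_le_four
  set I : Set ℝ := Ioo (Real.pi/4) (3*Real.pi/4) with hIdef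
  set μ : Measure (ℝ × ℝ) := (volume.restrict I).prod (volume.restrict I) with hμdef
  have hf_meas : AEStronglyMeasurable f (volume.restrict I) := hf_int.1
  have hw_int : Integrable (fun p : ℝ × ℝ => f p.1 * f p.2) μ := hf_int.mul_prod hf_int
  have hw_meas : AEStronglyMeasurable (fun p : ℝ × ℝ => f p.1 * f p.2) μ := hw_int.1
  have hw_nonneg : ∀ p : ℝ × ℝ, 0 ≤ f p.1 * f p.2 :=
    fun p => mul_nonneg (hf_nonneg _) (hf_nonneg _)
  have hae : ∀ᵐ p : ℝ × ℝ ∂μ, p.1 ∈ I ∧ p.2 ∈ I := by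
    rw [hμdef, Measure.prod_restrict]
    filter_upwards [ae_restrict_mem (measurableSet_Ioo.prod measurableSet_Ioo)] with p hp
    exact hp
  have habs : ∀ x ∈ I, ∀ y ∈ I, |x - y| ≤ Real.pi/2 := by
    intro x hx y hy
    rw [hIdef, mem_Ioo] at hx hy
    rw [abs_le]
    constructor <;> linarith [hx.1, hx.2, hy.1, hy.2]
  -- integrability of the three product integrands
  have hcont2 : Continuous fun p : ℝ × ℝ => (p.1 - p.2)^2 := by fun_prop
  have hcont3 : Continuous fun p : ℝ × ℝ => |p.1 - p.2|^3 := by fun_prop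
  have hH_int : Integrable (fun p : ℝ × ℝ => |p.1 - p.2|^3 * (f p.1 * f p.2)) μ := by
    refine Integrable.mono' (hw_int.const_mul 8) (hcont3.aestronglyMeasurable.mul hw_meas) ?_
    filter_upwards [hae] with p hp
    have h1 := habs _ hp.1 _ hp.2
    have h2 := hw_nonneg p
    have h3 : |p.1 - p.2|^3 ≤ 8 := by
      calc |p.1 - p.2|^3 ≤ (Real.pi/2)^3 := pow_le_pow_left₀ (abs_nonneg _) h1 3
        _ ≤ (2:ℝ)^3 := pow_le_pow_left₀ (by positivity) (by linarith) 3
        _ ≤ 8 := by norm_num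
    rw [Real.norm_eq_abs, abs_of_nonneg (by positivity)]
    nlinarith [abs_nonneg (p.1 - p.2), pow_nonneg (abs_nonneg (p.1-p.2)) 3]
  have hK_int : Integrable (fun p : ℝ × ℝ => (p.1 - p.2)^2 * (f p.1 * f p.2)) μ := by
    refine Integrable.mono' (hw_int.const_mul 8) (hcont2.aestronglyMeasurable.mul hw_meas) ?_
    filter_upwards [hae] with p hp
    have h1 := habs _ hp.1 _ hp.2
    have h2 := hw_nonneg p
    have h3 : (p.1 - p.2)^2 ≤ 8 := by
      rw [← sq_abs]
      nlinarith [abs_nonneg (p.1 - p.2)]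
    rw [Real.norm_eq_abs, abs_of_nonneg (by positivity)]
    nlinarith [sq_nonneg (p.1 - p.2)]
  have hg2_int : Integrable (fun p : ℝ × ℝ =>
      |Real.sin (p.1 - p.2)| * f p.1 * f p.2 * (p.1 - p.2)^2) μ := by
    have : Integrable (fun p : ℝ × ℝ =>
        (|Real.sin (p.1 - p.2)| * (p.1 - p.2)^2) * (f p.1 * f p.2)) μ := by
      refine Integrable.mono' (hw_int.const_mul 8)
        (((continuous_abs.comp (Real.continuous_sin.comp (continuous_fst.sub continuous_snd))).mul
          hcont2).aestronglyMeasurable.mul hw_meas) ?_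
      filter_upwards [hae] with p hp
      have h1 := habs _ hp.1 _ hp.2
      have h2 := hw_nonneg p
      have h3 : (p.1 - p.2)^2 ≤ 8 := by
        rw [← sq_abs]; nlinarith [abs_nonneg (p.1 - p.2)]
      have h4 : |Real.sin (p.1 - p.2)| ≤ 1 := Real.abs_sin_le_one _
      rw [Real.norm_eq_abs, abs_of_nonneg (by positivity)]
      have h5 : |Real.sin (p.1 - p.2)| * (p.1 - p.2)^2 ≤ 8 := by nlinarith [abs_nonneg (Real.sin (p.1-p.2)), sq_nonneg (p.1-p.2)]
      nlinarith
    exact this.congr (ae_of_all _ fun p => by ring)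
  -- one-dimensional integrabilities
  have hxI : ∀ x ∈ I, |x| ≤ 3*Real.pi/4 := by
    intro x hx
    rw [hIdef, mem_Ioo] at hx
    rw [abs_le]; constructor <;> linarith [hx.1, hx.2]
  have hxf_int : Integrable (fun x => x * f x) (volume.restrict I) := by
    refine Integrable.mono' (hf_int.const_mul (3*Real.pi/4))
      (continuous_id.aestronglyMeasurable.mul hf_meas) ?_
    filter_upwards [ae_restrict_mem measurableSet_Ioo] with x hx
    rw [Real.norm_eq_abs, abs_mul, abs_of_nonneg (hf_nonneg x)]
    exact mul_le_mul_of_nonneg_right (hxI x hx) (hf_nonneg x)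
  have hlin_int : Integrable (fun x => (x - φp) * f x) (volume.restrict I) :=
    (hxf_int.sub (hf_int.const_mul φp)).congr
      (ae_of_all _ fun x => by simp only [Pi.sub_apply]; ring)
  have hsq_int : Integrable (fun x => (x - φp)^2 * f x) (volume.restrict I) := by
    refine Integrable.mono' (hf_int.const_mul ((3*Real.pi/4 + |φp|)^2))
      ((by fun_prop : Continuous fun x : ℝ => (x - φp)^2).aestronglyMeasurable.mul hf_meas) ?_
    filter_upwards [ae_restrict_mem measurableSet_Ioo] with x hx
    rw [Real.norm_eq_abs, abs_mul, abs_of_nonneg (hf_nonneg x)]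
    refine mul_le_mul_of_nonneg_right ?_ (hf_nonneg x)
    have h1 : |x - φp| ≤ 3*Real.pi/4 + |φp| := by
      rw [sub_eq_add_neg]
      exact (abs_add_le x (-φp)).trans (by rw [abs_neg]; linarith [hxI x hx])
    rw [abs_of_nonneg (sq_nonneg _), ← sq_abs]
    exact pow_le_pow_left₀ (abs_nonneg _) h1 2
  have hM : ∫ x in I, (x - φp) * f x = 0 := by
    have e1 : ∫ x in I, (x - φp) * f x = ∫ x in I, (x * f x - φp * f x) :=
      integral_congr_ae (ae_of_all _ fun x => by ring)
    rw [e1, integral_sub hxf_int (hf_int.const_mul φp), integral_const_mul, ← hρ_def, hφp]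
    field_simp
    ring
  -- ∫ K = 2 ρ V
  have hKval : ∫ p, (p.1 - p.2)^2 * (f p.1 * f p.2) ∂μ = 2 * ρ * V := by
    have e1 : (fun p : ℝ × ℝ => (p.1 - p.2)^2 * (f p.1 * f p.2)) =
        (fun p : ℝ × ℝ => ((p.1 - φp)^2 * f p.1) * f p.2 + f p.1 * ((p.2 - φp)^2 * f p.2) +
          (-2) * (((p.1 - φp) * f p.1) * ((p.2 - φp) * f p.2))) := by
      funext p; ring
    have i1 : Integrable (fun p : ℝ × ℝ => ((p.1 - φp)^2 * f p.1) * f p.2) μ :=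
      hsq_int.mul_prod hf_int
    have i2 : Integrable (fun p : ℝ × ℝ => f p.1 * ((p.2 - φp)^2 * f p.2)) μ :=
      hf_int.mul_prod hsq_int
    have i3 : Integrable (fun p : ℝ × ℝ =>
        (((p.1 - φp) * f p.1) * ((p.2 - φp) * f p.2))) μ :=
      hlin_int.mul_prod hlin_int
    have i12 : Integrable (fun p : ℝ × ℝ => ((p.1 - φp)^2 * f p.1) * f p.2 +
        f p.1 * ((p.2 - φp)^2 * f p.2)) μ := i1.add i2
    have i3' : Integrable (fun p : ℝ × ℝ =>
        (-2) * (((p.1 - φp) * f p.1) * ((p.2 - φp) * f p.2))) μ := i3.const_mul (-2)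
    have P1 : ∫ p : ℝ × ℝ, ((p.1 - φp)^2 * f p.1) * f p.2 ∂μ
        = (∫ x in I, (x - φp)^2 * f x) * ∫ x in I, f x := by
      rw [hμdef]; exact integral_prod_mul (fun x => (x - φp)^2 * f x) f
    have P2 : ∫ p : ℝ × ℝ, f p.1 * ((p.2 - φp)^2 * f p.2) ∂μ
        = (∫ x in I, f x) * ∫ x in I, (x - φp)^2 * f x := by
      rw [hμdef]; exact integral_prod_mul f (fun x => (x - φp)^2 * f x)
    have P3 : ∫ p : ℝ × ℝ, ((p.1 - φp) * f p.1) * ((p.2 - φp) * f p.2) ∂μ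
        = (∫ x in I, (x - φp) * f x) * ∫ x in I, (x - φp) * f x := by
      rw [hμdef]; exact integral_prod_mul (fun x => (x - φp) * f x) (fun x => (x - φp) * f x)
    rw [e1, integral_add i12 i3', integral_add i1 i2, integral_const_mul, P1, P2, P3, hM,
      ← hρ_def, ← hV]
    ring
  -- total mass of the product weight
  have hρρ : ∫ p : ℝ × ℝ, f p.1 * f p.2 ∂μ = ρ * ρ := by
    rw [hμdef, integral_prod_mul f f, ← hρ_def]
  -- Hölder's inequality setup
  have hF1nn : ∀ p : ℝ × ℝ, 0 ≤ (p.1 - p.2)^2 * (f p.1 * f p.2) ^ ((2:ℝ)/3) :=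
    fun p => mul_nonneg (sq_nonneg _) (Real.rpow_nonneg (hw_nonneg p) _)
  have hG1nn : ∀ p : ℝ × ℝ, 0 ≤ (f p.1 * f p.2) ^ ((1:ℝ)/3) :=
    fun p => Real.rpow_nonneg (hw_nonneg p) _
  have hF1pow : ∀ p : ℝ × ℝ, ((p.1 - p.2)^2 * (f p.1 * f p.2) ^ ((2:ℝ)/3)) ^ ((3:ℝ)/2)
      = |p.1 - p.2|^3 * (f p.1 * f p.2) := by
    intro p
    rw [Real.mul_rpow (sq_nonneg _) (Real.rpow_nonneg (hw_nonneg p) _),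
      ← Real.rpow_natCast |p.1 - p.2| 3, ← sq_abs, ← Real.rpow_natCast |p.1 - p.2| 2,
      ← Real.rpow_mul (abs_nonneg _), ← Real.rpow_mul (hw_nonneg p)]
    norm_num
  have hG1pow : ∀ p : ℝ × ℝ, ((f p.1 * f p.2) ^ ((1:ℝ)/3)) ^ ((3:ℝ)) = f p.1 * f p.2 := by
    intro p
    rw [← Real.rpow_mul (hw_nonneg p)]
    norm_num
  have hF1meas : AEStronglyMeasurable
      (fun p : ℝ × ℝ => (p.1 - p.2)^2 * (f p.1 * f p.2) ^ ((2:ℝ)/3)) μ :=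
    hcont2.aestronglyMeasurable.mul
      ((Real.continuous_rpow_const (by norm_num)).comp_aestronglyMeasurable hw_meas)
  have hG1meas : AEStronglyMeasurable (fun p : ℝ × ℝ => (f p.1 * f p.2) ^ ((1:ℝ)/3)) μ :=
    (Real.continuous_rpow_const (by norm_num)).comp_aestronglyMeasurable hw_meas
  have A32 : ENNReal.ofReal (3/2) ≠ 0 := by
    rw [Ne, ENNReal.ofReal_eq_zero]; norm_num
  have B32 : ENNReal.ofReal (3/2) ≠ ⊤ := ENNReal.ofReal_ne_top
  have A3 : ENNReal.ofReal 3 ≠ 0 := by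
    rw [Ne, ENNReal.ofReal_eq_zero]; norm_num
  have B3 : ENNReal.ofReal 3 ≠ ⊤ := ENNReal.ofReal_ne_top
  have memF1 : MemLp (fun p : ℝ × ℝ => (p.1 - p.2)^2 * (f p.1 * f p.2) ^ ((2:ℝ)/3))
      (ENNReal.ofReal (3/2)) μ := by
    rw [← memLp_norm_rpow_iff hF1meas A32 B32, ENNReal.toReal_ofReal (by norm_num),
      ENNReal.div_self A32 B32, memLp_one_iff_integrable]
    refine hH_int.congr (ae_of_all _ fun p => ?_)
    dsimp only
    rw [Real.norm_of_nonneg (hF1nn p), hF1pow p]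
  have memG1 : MemLp (fun p : ℝ × ℝ => (f p.1 * f p.2) ^ ((1:ℝ)/3))
      (ENNReal.ofReal 3) μ := by
    rw [← memLp_norm_rpow_iff hG1meas A3 B3, ENNReal.toReal_ofReal (by norm_num),
      ENNReal.div_self A3 B3, memLp_one_iff_integrable]
    refine hw_int.congr (ae_of_all _ fun p => ?_)
    dsimp only
    rw [Real.norm_of_nonneg (hG1nn p), hG1pow p]
  have hpq : (3/2 : ℝ).HolderConjugate 3 := by constructor <;> norm_num
  have holder := MeasureTheory.integral_mul_le_Lp_mul_Lq_of_nonneg hpq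
    (ae_of_all _ hF1nn) (ae_of_all _ hG1nn) memF1 memG1
  -- rewrite the three integrals in Hölder
  have eFG : ∫ p : ℝ × ℝ, ((p.1 - p.2)^2 * (f p.1 * f p.2) ^ ((2:ℝ)/3)) *
        ((f p.1 * f p.2) ^ ((1:ℝ)/3)) ∂μ
      = ∫ p : ℝ × ℝ, (p.1 - p.2)^2 * (f p.1 * f p.2) ∂μ := by
    refine integral_congr_ae (ae_of_all _ fun p => ?_)
    dsimp only
    rw [mul_assoc, ← Real.rpow_add' (hw_nonneg p) (by norm_num)]
    norm_num
  have eF : ∫ p : ℝ × ℝ, ((p.1 - p.2)^2 * (f p.1 * f p.2) ^ ((2:ℝ)/3)) ^ ((3:ℝ)/2) ∂μ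
      = ∫ p : ℝ × ℝ, |p.1 - p.2|^3 * (f p.1 * f p.2) ∂μ :=
    integral_congr_ae (ae_of_all _ fun p => hF1pow p)
  have eG : ∫ p : ℝ × ℝ, ((f p.1 * f p.2) ^ ((1:ℝ)/3)) ^ ((3:ℝ)) ∂μ
      = ∫ p : ℝ × ℝ, f p.1 * f p.2 ∂μ :=
    integral_congr_ae (ae_of_all _ fun p => hG1pow p)
  rw [eFG, eF, eG, hKval, hρρ] at holder
  -- holder : 2 * ρ * V ≤ (∫ H)^(1/(3/2)) * (ρ*ρ)^(1/3)
  have hJnn : 0 ≤ ∫ p : ℝ × ℝ, |p.1 - p.2|^3 * (f p.1 * f p.2) ∂μ :=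
    integral_nonneg fun p => mul_nonneg (by positivity) (hw_nonneg p)
  have hVnn : 0 ≤ V := by
    rw [hV]; exact integral_nonneg fun x => mul_nonneg (sq_nonneg _) (hf_nonneg x)
  -- pointwise comparison with the sine integrand
  have step1 : 2/Real.pi * ∫ p : ℝ × ℝ, |p.1 - p.2|^3 * (f p.1 * f p.2) ∂μ
      ≤ ∫ p : ℝ × ℝ, |Real.sin (p.1 - p.2)| * f p.1 * f p.2 * (p.1 - p.2)^2 ∂μ := by
    rw [← integral_const_mul]
    refine integral_mono_ae (hH_int.const_mul _) hg2_int ?_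
    filter_upwards [hae] with p hp
    have h1 := habs _ hp.1 _ hp.2
    have hs := sin_lb' h1
    have hw := hw_nonneg p
    calc 2/Real.pi * (|p.1 - p.2|^3 * (f p.1 * f p.2))
        = (2/Real.pi * |p.1 - p.2|) * ((p.1 - p.2)^2 * (f p.1 * f p.2)) := by
          rw [show |p.1 - p.2|^3 = (p.1 - p.2)^2 * |p.1 - p.2| by rw [← sq_abs]; ring]
          ring
      _ ≤ |Real.sin (p.1 - p.2)| * ((p.1 - p.2)^2 * (f p.1 * f p.2)) :=
          mul_le_mul_of_nonneg_right hs (mul_nonneg (sq_nonneg _) hw)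
      _ = |Real.sin (p.1 - p.2)| * f p.1 * f p.2 * (p.1 - p.2)^2 := by ring
  set J := ∫ p : ℝ × ℝ, |p.1 - p.2|^3 * (f p.1 * f p.2) ∂μ with hJdef
  -- massage holder into the key middle inequality
  have holder' : 2 * ρ * V ≤ J ^ ((2:ℝ)/3) * (ρ * ρ) ^ ((1:ℝ)/3) := by
    rw [show (2:ℝ)/3 = 1/(3/2) by norm_num]
    exact holder
  have hρ23 : (0:ℝ) < ρ ^ ((2:ℝ)/3) := Real.rpow_pos_of_pos hρ _
  have hρρ3 : (ρ * ρ) ^ ((1:ℝ)/3) = ρ ^ ((2:ℝ)/3) := by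
    rw [show ρ * ρ = ρ ^ ((2:ℝ)) by
        rw [show (2:ℝ) = ((2:ℕ):ℝ) by norm_num, Real.rpow_natCast]; ring,
      ← Real.rpow_mul hρ.le]
    norm_num
  have hmid : ρ ^ ((1:ℝ)/3) * V ≤ J ^ ((2:ℝ)/3) := by
    have key0 : 2 * ρ * V = (2 * (ρ ^ ((1:ℝ)/3) * V)) * ρ ^ ((2:ℝ)/3) := by
      have hsplit : ρ = ρ ^ ((1:ℝ)/3) * ρ ^ ((2:ℝ)/3) := by
        rw [← Real.rpow_add hρ]; norm_num
      calc 2 * ρ * V = 2 * (ρ ^ ((1:ℝ)/3) * ρ ^ ((2:ℝ)/3)) * V := by rw [← hsplit]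
        _ = (2 * (ρ ^ ((1:ℝ)/3) * V)) * ρ ^ ((2:ℝ)/3) := by ring
    have h2 : (2 * (ρ ^ ((1:ℝ)/3) * V)) * ρ ^ ((2:ℝ)/3) ≤ J ^ ((2:ℝ)/3) * ρ ^ ((2:ℝ)/3) := by
      rw [← key0, ← hρρ3]; exact holder'
    have h3 := le_of_mul_le_mul_right h2 hρ23
    have h4 : 0 ≤ ρ ^ ((1:ℝ)/3) * V := mul_nonneg (Real.rpow_nonneg hρ.le _) hVnn
    linarith
  have key : Real.sqrt ρ * V ^ ((3:ℝ)/2) ≤ J := by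
    have h4 := Real.rpow_le_rpow (mul_nonneg (Real.rpow_nonneg hρ.le _) hVnn) hmid
      (by norm_num : (0:ℝ) ≤ 3/2)
    rw [Real.mul_rpow (Real.rpow_nonneg hρ.le _) hVnn, ← Real.rpow_mul hρ.le,
      ← Real.rpow_mul hJnn] at h4
    norm_num at h4
    rw [Real.sqrt_eq_rpow]
    convert h4 using 3 <;> norm_num
  -- Fubini
  have hg2u : Integrable (Function.uncurry fun x y : ℝ =>
      |Real.sin (x - y)| * f x * f y * (x - y)^2)
      ((volume.restrict I).prod (volume.restrict I)) := hg2_int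
  have hFub := integral_integral hg2u
  calc (2 * Real.sqrt ρ / Real.pi) * V ^ ((3:ℝ)/2)
      = 2/Real.pi * (Real.sqrt ρ * V ^ ((3:ℝ)/2)) := by ring
    _ ≤ 2/Real.pi * J := mul_le_mul_of_nonneg_left key (by positivity)
    _ ≤ ∫ p : ℝ × ℝ, |Real.sin (p.1 - p.2)| * f p.1 * f p.2 * (p.1 - p.2)^2 ∂μ := step1
    _ = _ := by rw [hμdef]; exact (hFub).symm ▸ rfl
end

section
/- Let f, g be probability measures on the flat torus 𝕋¹ = ℝ/2πℤ, both supported in 𝕋¹₊ ∪ 𝕋¹₋ where 𝕋¹₊ = (π/4, 3π/4) and 𝕋¹₋ = (-3π/4, -π/4), and suppose f(𝕋¹₊) = g(𝕋¹₊) and f(𝕋¹₋) = g(𝕋¹₋). Then the squared Wasserstein-2 distance on 𝕋¹ (with cost the squared geodesic distance dist_{𝕋¹}) splits: W₂^{𝕋¹}(f,g)² = W₂^{𝕋¹₊}(f|_{𝕋¹₊}, g|_{𝕋¹₊})² + W₂^{𝕋¹₋}(f|_{𝕋¹₋}, g|_{𝕋¹₋})², where the restricted distances use the same cost restricted to each interval.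 -/
open MeasureTheory Set

/-- Squared Wasserstein-2 distance on the flat torus of length `2π`,
with cost the squared geodesic distance, as an infimum over transference plans. -/
noncomputable def W2sq (μ ν : Measure (AddCircle (2*Real.pi))) : ENNReal :=
  ⨅ (γ : Measure (AddCircle (2*Real.pi) × AddCircle (2*Real.pi)))
    (_ : γ.fst = μ) (_ : γ.snd = ν), ∫⁻ p, edist p.1 p.2 ^ 2 ∂γ

/-- The upper group `𝕋¹₊ = (π/4, 3π/4)` on the torus. -/
def Tplus : Set (AddCircle (2*Real.pi)) :=
  (fun x : ℝ => (x : AddCircle (2*Real.pi))) '' Ioo (Real.pi/4) (3*Real.pi/4)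

/-- The lower group `𝕋¹₋ = (-3π/4, -π/4)` on the torus. -/
def Tminus : Set (AddCircle (2*Real.pi)) :=
  (fun x : ℝ => (x : AddCircle (2*Real.pi))) '' Ioo (-(3*Real.pi/4)) (-(Real.pi/4))

local notation "𝕋" => AddCircle (2*Real.pi)

namespace StmtSeven

noncomputable def C : ENNReal := ENNReal.ofReal (Real.pi/2) ^ 2

lemma norm_coe_le (w : ℝ) : ‖(w : 𝕋)‖ ≤ |w| := by
  simpa using QuotientAddGroup.norm_mk_le_norm (S := AddSubgroup.zmultiples (2*Real.pi)) (m := w)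

lemma cross_norm_ge (w : ℝ) (h1 : Real.pi/2 ≤ |w|) (h2 : |w| ≤ 3*Real.pi/2) :
    Real.pi/2 ≤ ‖(w : 𝕋)‖ := by
  have hpi := Real.pi_pos
  have habs := abs_le.mp h2
  rw [AddCircle.norm_eq (2*Real.pi)]
  set k := round ((2*Real.pi)⁻¹ * w) with hk
  rcases lt_trichotomy k 0 with h | h | h
  · have hk0 : k ≤ -1 := by omega
    have hk1 : (k : ℝ) ≤ -1 := by exact_mod_cast hk0
    refine le_abs.mpr (Or.inl ?_)
    nlinarith
  · rw [h]
    simpa using h1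
  · have hk1 : (1 : ℝ) ≤ (k : ℝ) := by exact_mod_cast h
    refine le_abs.mpr (Or.inr ?_)
    nlinarith

lemma dist_coe_le (u v : ℝ) : dist (u : 𝕋) (v : 𝕋) ≤ |u - v| := by
  rw [dist_eq_norm, ← AddCircle.coe_sub]
  exact norm_coe_le _

lemma edist_sq_within_plus {x y : 𝕋} (hx : x ∈ Tplus) (hy : y ∈ Tplus) :
    edist x y ^ 2 ≤ C := by
  obtain ⟨u, hu, rfl⟩ := hx
  obtain ⟨v, hv, rfl⟩ := hy
  obtain ⟨hu1, hu2⟩ := hu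
  obtain ⟨hv1, hv2⟩ := hv
  have hd : dist (u : 𝕋) (v : 𝕋) ≤ Real.pi/2 :=
    le_trans (dist_coe_le u v) (abs_le.mpr ⟨by linarith, by linarith⟩)
  rw [edist_dist]
  unfold C
  exact pow_le_pow_left' (ENNReal.ofReal_le_ofReal hd) 2

lemma edist_sq_within_minus {x y : 𝕋} (hx : x ∈ Tminus) (hy : y ∈ Tminus) :
    edist x y ^ 2 ≤ C := by
  obtain ⟨u, hu, rfl⟩ := hx
  obtain ⟨v, hv, rfl⟩ := hy
  obtain ⟨hu1, hu2⟩ := hu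
  obtain ⟨hv1, hv2⟩ := hv
  have hd : dist (u : 𝕋) (v : 𝕋) ≤ Real.pi/2 :=
    le_trans (dist_coe_le u v) (abs_le.mpr ⟨by linarith, by linarith⟩)
  rw [edist_dist]
  unfold C
  exact pow_le_pow_left' (ENNReal.ofReal_le_ofReal hd) 2

lemma edist_sq_cross {x y : 𝕋} (hx : x ∈ Tplus) (hy : y ∈ Tminus) :
    C ≤ edist x y ^ 2 := by
  have hpi := Real.pi_pos
  obtain ⟨u, hu, rfl⟩ := hx
  obtain ⟨v, hv, rfl⟩ := hy
  obtain ⟨hu1, hu2⟩ := hu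
  obtain ⟨hv1, hv2⟩ := hv
  have hd : Real.pi/2 ≤ dist (u : 𝕋) (v : 𝕋) := by
    rw [dist_eq_norm, ← AddCircle.coe_sub]
    refine cross_norm_ge (u - v) ?_ ?_
    · exact le_abs.mpr (Or.inl (by linarith))
    · exact abs_le.mpr ⟨by linarith, by linarith⟩
  rw [edist_dist]
  unfold C
  exact pow_le_pow_left' (ENNReal.ofReal_le_ofReal hd) 2

lemma edist_sq_cross' {x y : 𝕋} (hx : x ∈ Tminus) (hy : y ∈ Tplus) :
    C ≤ edist x y ^ 2 := by
  rw [edist_comm]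
  exact edist_sq_cross hy hx

lemma measurableSet_Tplus : MeasurableSet Tplus :=
  (QuotientAddGroup.isOpenMap_coe _ isOpen_Ioo).measurableSet

lemma measurableSet_Tminus : MeasurableSet Tminus :=
  (QuotientAddGroup.isOpenMap_coe _ isOpen_Ioo).measurableSet

lemma disjoint_Tplus_Tminus : Disjoint Tplus Tminus := by
  have hpi := Real.pi_pos
  rw [Set.disjoint_left]
  rintro x ⟨u, ⟨hu1, hu2⟩, rfl⟩ ⟨v, ⟨hv1, hv2⟩, hvu⟩
  have hvu' : ((v : ℝ) : 𝕋) = ((u : ℝ) : 𝕋) := hvu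
  have h0 : ((u - v : ℝ) : 𝕋) = 0 := by
    rw [AddCircle.coe_sub, hvu', sub_self]
  have := cross_norm_ge (u - v)
    (le_abs.mpr (Or.inl (by linarith))) (abs_le.mpr ⟨by linarith, by linarith⟩)
  rw [h0, norm_zero] at this
  linarith

lemma cost_measurable : Measurable (fun p : 𝕋 × 𝕋 => edist p.1 p.2 ^ 2) := by
  measurability

/-- Basic bound: W2sq is at most the cost of any transference plan. -/
lemma W2sq_le_lintegral (μ ν : Measure 𝕋) (γ : Measure (𝕋 × 𝕋))
    (h1 : γ.fst = μ) (h2 : γ.snd = ν) :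
    W2sq μ ν ≤ ∫⁻ p, edist p.1 p.2 ^ 2 ∂γ := by
  refine iInf_le_of_le γ ?_
  rw [iInf_pos h1, iInf_pos h2]

lemma fst_restrict_prod {α β : Type*} [MeasurableSpace α] [MeasurableSpace β]
    (γ : Measure (α × β)) (S : Set α) (hS : MeasurableSet S) :
    (γ.restrict (S ×ˢ (univ : Set β))).fst = γ.fst.restrict S := by
  ext s hs
  rw [Measure.fst_apply hs, Measure.restrict_apply (measurable_fst hs),
    Measure.restrict_apply hs, Measure.fst_apply (hs.inter hS)]
  congr 1
  ext ⟨a, b⟩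
  simp [and_comm]

lemma snd_restrict_prod {α β : Type*} [MeasurableSpace α] [MeasurableSpace β]
    (γ : Measure (α × β)) (S : Set β) (hS : MeasurableSet S) :
    (γ.restrict ((univ : Set α) ×ˢ S)).snd = γ.snd.restrict S := by
  ext s hs
  rw [Measure.snd_apply hs, Measure.restrict_apply (measurable_snd hs),
    Measure.restrict_apply hs, Measure.snd_apply (hs.inter hS)]
  congr 1
  ext ⟨a, b⟩
  simp [and_comm]

lemma fst_smul {α β : Type*} [MeasurableSpace α] [MeasurableSpace β]
    (c : ENNReal) (μ : Measure (α × β)) : (c • μ).fst = c • μ.fst := by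
  ext s hs
  simp [Measure.fst_apply hs]

lemma snd_smul {α β : Type*} [MeasurableSpace α] [MeasurableSpace β]
    (c : ENNReal) (μ : Measure (α × β)) : (c • μ).snd = c • μ.snd := by
  ext s hs
  simp [Measure.snd_apply hs]

lemma prod_fst {α β : Type*} [MeasurableSpace α] [MeasurableSpace β]
    (A : Measure α) (B : Measure β) [SFinite A] [SFinite B] :
    (A.prod B).fst = B univ • A := by
  ext s hs
  rw [Measure.fst_apply hs, ← Set.prod_univ, Measure.prod_prod, Measure.smul_apply,
    smul_eq_mul, mul_comm]

lemma prod_snd {α β : Type*} [MeasurableSpace α] [MeasurableSpace β]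
    (A : Measure α) (B : Measure β) [SFinite A] [SFinite B] :
    (A.prod B).snd = A univ • B := by
  ext s hs
  rw [Measure.snd_apply hs, ← Set.univ_prod, Measure.prod_prod, Measure.smul_apply,
    smul_eq_mul]

lemma disjoint_prod_left {α β : Type*} {s s' : Set α} {t t' : Set β}
    (h : Disjoint s s') : Disjoint (s ×ˢ t) (s' ×ˢ t') := by
  rw [Set.disjoint_left] at h ⊢
  rintro ⟨a, b⟩ ⟨ha, _⟩ ⟨ha', _⟩
  exact h ha ha'

lemma disjoint_prod_right {α β : Type*} {s s' : Set α} {t t' : Set β}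
    (h : Disjoint t t') : Disjoint (s ×ˢ t) (s' ×ˢ t') := by
  rw [Set.disjoint_left] at h ⊢
  rintro ⟨a, b⟩ ⟨_, hb⟩ ⟨_, hb'⟩
  exact h hb hb'

/-- The key construction: from a plan `γ` supported on `(S ∪ T)²` with balanced
cross mass, build a plan between the restrictions to `S` whose cost is at most
the `S×S` cost plus the `S×T` cost of `γ`. -/
lemma key (γ : Measure (𝕋 × 𝕋)) [IsFiniteMeasure γ]
    (S T : Set 𝕋) (hS : MeasurableSet S) (hT : MeasurableSet T)
    (hd : Disjoint S T)
    (h0 : γ (((S ∪ T) ×ˢ (S ∪ T))ᶜ) = 0)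
    (hbal : γ (S ×ˢ T) = γ (T ×ˢ S))
    (hup : ∀ x ∈ S, ∀ y ∈ S, edist x y ^ 2 ≤ C)
    (hlow : ∀ x ∈ S, ∀ y ∈ T, C ≤ edist x y ^ 2) :
    W2sq (γ.fst.restrict S) (γ.snd.restrict S) ≤
      ∫⁻ p in S ×ˢ S, edist p.1 p.2 ^ 2 ∂γ + ∫⁻ p in S ×ˢ T, edist p.1 p.2 ^ 2 ∂γ := by
  set N := (S ∪ T)ᶜ with hN
  have hNmeas : MeasurableSet N := (hS.union hT).compl
  set m := γ (S ×ˢ T) with hm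
  have hmne : m ≠ ⊤ := (measure_lt_top γ _).ne
  set A := (γ.restrict (S ×ˢ T)).fst with hA
  set B := (γ.restrict (T ×ˢ S)).snd with hB
  have hAuniv : A univ = m := by
    rw [hA, Measure.fst_univ, Measure.restrict_apply_univ]
  have hBuniv : B univ = m := by
    rw [hB, Measure.snd_univ, Measure.restrict_apply_univ, ← hbal]
  -- support facts
  have hSN : γ (S ×ˢ N) = 0 := by
    refine measure_mono_null ?_ h0
    rintro ⟨a, b⟩ ⟨ha, hb⟩
    simp only [mem_compl_iff, mem_prod, not_and_or]
    exact Or.inr hb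
  have hNS : γ (N ×ˢ S) = 0 := by
    refine measure_mono_null ?_ h0
    rintro ⟨a, b⟩ ⟨ha, hb⟩
    simp only [mem_compl_iff, mem_prod, not_and_or]
    exact Or.inl ha
  have hAcompl : A Sᶜ = 0 := by
    rw [hA, Measure.fst_apply hS.compl,
      Measure.restrict_apply (measurable_fst hS.compl)]
    convert measure_empty (μ := γ)
    ext ⟨a, b⟩
    simp only [mem_inter_iff, mem_preimage, mem_compl_iff, mem_prod, mem_empty_iff_false,
      iff_false, not_and]
    tauto
  have hBcompl : B Sᶜ = 0 := by
    rw [hB, Measure.snd_apply hS.compl,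
      Measure.restrict_apply (measurable_snd hS.compl)]
    convert measure_empty (μ := γ)
    ext ⟨a, b⟩
    simp only [mem_inter_iff, mem_preimage, mem_compl_iff, mem_prod, mem_empty_iff_false,
      iff_false, not_and]
    tauto
  -- decomposition of the restricted marginals
  have hsplitS : S ×ˢ (univ : Set 𝕋) = (S ×ˢ S ∪ S ×ˢ T) ∪ S ×ˢ N := by
    rw [← Set.prod_union, ← Set.prod_union, hN, Set.union_compl_self]
  have hrestr_fst : γ.restrict (S ×ˢ (univ : Set 𝕋)) =
      γ.restrict (S ×ˢ S) + γ.restrict (S ×ˢ T) := by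
    rw [hsplitS, Measure.restrict_union ?_ (hS.prod hNmeas),
      Measure.restrict_union (disjoint_prod_right hd) (hS.prod hT),
      Measure.restrict_eq_zero.mpr hSN, add_zero]
    · exact (disjoint_prod_right (disjoint_compl_right.mono_left le_sup_left)).union_left
        (disjoint_prod_right (disjoint_compl_right.mono_left le_sup_right))
  have hsplitS' : (univ : Set 𝕋) ×ˢ S = (S ×ˢ S ∪ T ×ˢ S) ∪ N ×ˢ S := by
    rw [← Set.union_prod, ← Set.union_prod, hN, Set.union_compl_self]
  have hrestr_snd : γ.restrict ((univ : Set 𝕋) ×ˢ S) =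
      γ.restrict (S ×ˢ S) + γ.restrict (T ×ˢ S) := by
    rw [hsplitS', Measure.restrict_union ?_ (hNmeas.prod hS),
      Measure.restrict_union (disjoint_prod_left hd) (hT.prod hS),
      Measure.restrict_eq_zero.mpr hNS, add_zero]
    · exact (disjoint_prod_left (disjoint_compl_right.mono_left le_sup_left)).union_left
        (disjoint_prod_left (disjoint_compl_right.mono_left le_sup_right))
  -- the new plan
  set γ' := γ.restrict (S ×ˢ S) + m⁻¹ • (A.prod B) with hγ'
  have hABfst : (m⁻¹ • (A.prod B)).fst = A := by
    rw [fst_smul, prod_fst, hBuniv]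
    rcases eq_or_ne m 0 with h | h
    · have : A = 0 := by
        rw [← Measure.measure_univ_eq_zero, hAuniv, h]
      simp [this]
    · rw [smul_smul, ENNReal.inv_mul_cancel h hmne, one_smul]
  have hABsnd : (m⁻¹ • (A.prod B)).snd = B := by
    rw [snd_smul, prod_snd, hAuniv]
    rcases eq_or_ne m 0 with h | h
    · have : B = 0 := by
        rw [← Measure.measure_univ_eq_zero, hBuniv, h]
      simp [this]
    · rw [smul_smul, ENNReal.inv_mul_cancel h hmne, one_smul]
  have hfst' : γ'.fst = γ.fst.restrict S := by
    rw [hγ', Measure.fst_add, hABfst, hA, ← Measure.fst_add, ← hrestr_fst,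
      fst_restrict_prod γ S hS]
  have hsnd' : γ'.snd = γ.snd.restrict S := by
    rw [hγ', Measure.snd_add, hABsnd, hB, ← Measure.snd_add, ← hrestr_snd,
      snd_restrict_prod γ S hS]
  refine le_trans (W2sq_le_lintegral _ _ γ' hfst' hsnd') ?_
  rw [hγ', lintegral_add_measure, lintegral_smul_measure]
  refine add_le_add le_rfl ?_
  -- bound on the product part
  have hABsupp : (A.prod B) ((S ×ˢ S)ᶜ) = 0 := by
    have hsub : (S ×ˢ S)ᶜ ⊆ (Sᶜ ×ˢ (univ : Set 𝕋)) ∪ ((univ : Set 𝕋) ×ˢ Sᶜ) := by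
      rintro ⟨a, b⟩ hab
      simp only [mem_compl_iff, mem_prod, not_and_or] at hab
      rcases hab with h | h
      · exact Or.inl ⟨h, trivial⟩
      · exact Or.inr ⟨trivial, h⟩
    refine measure_mono_null hsub (measure_union_null ?_ ?_)
    · rw [Measure.prod_prod, hAcompl, zero_mul]
    · rw [Measure.prod_prod, hBcompl, mul_zero]
  have hint : ∫⁻ p, edist p.1 p.2 ^ 2 ∂(A.prod B) ≤ C * (m * m) := by
    have heq : A.prod B = (A.prod B).restrict (S ×ˢ S) :=
      (Measure.restrict_eq_self_of_ae_mem (mem_ae_iff.mpr hABsupp)).symm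
    rw [heq]
    calc ∫⁻ p in S ×ˢ S, edist p.1 p.2 ^ 2 ∂(A.prod B)
        ≤ ∫⁻ _ in S ×ˢ S, C ∂(A.prod B) := by
          refine setLIntegral_mono' (hS.prod hS) ?_
          rintro ⟨a, b⟩ ⟨ha, hb⟩
          exact hup a ha b hb
      _ = C * (A.prod B) (S ×ˢ S) := setLIntegral_const _ _
      _ ≤ C * (A.prod B) univ := by
          gcongr
          exact subset_univ _
      _ = C * (m * m) := by
          rw [← Set.univ_prod_univ, Measure.prod_prod, hAuniv, hBuniv]
  have hCm : C * m ≤ ∫⁻ p in S ×ˢ T, edist p.1 p.2 ^ 2 ∂γ := by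
    calc C * m = ∫⁻ _ in S ×ˢ T, C ∂γ := (setLIntegral_const _ _).symm
      _ ≤ ∫⁻ p in S ×ˢ T, edist p.1 p.2 ^ 2 ∂γ := by
          refine setLIntegral_mono' (hS.prod hT) ?_
          rintro ⟨a, b⟩ ⟨ha, hb⟩
          exact hlow a ha b hb
  rcases eq_or_ne m 0 with h | h
  · have hA0 : A = 0 := by rw [← Measure.measure_univ_eq_zero, hAuniv, h]
    rw [hA0]
    simp
  · calc m⁻¹ * ∫⁻ p, edist p.1 p.2 ^ 2 ∂(A.prod B)
        ≤ m⁻¹ * (C * (m * m)) := by gcongr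
      _ = (m⁻¹ * m) * (C * m) := by ring
      _ = C * m := by rw [ENNReal.inv_mul_cancel h hmne, one_mul]
      _ ≤ _ := hCm

end StmtSeven

open StmtSeven in
theorem stmt_7 (f g : Measure (AddCircle (2*Real.pi)))
    [IsProbabilityMeasure f] [IsProbabilityMeasure g]
    (hf_supp : f (Tplus ∪ Tminus)ᶜ = 0) (hg_supp : g (Tplus ∪ Tminus)ᶜ = 0)
    (hplus : f Tplus = g Tplus) (hminus : f Tminus = g Tminus) :
    W2sq f g = W2sq (f.restrict Tplus) (g.restrict Tplus)
      + W2sq (f.restrict Tminus) (g.restrict Tminus) := by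
  have hTp := measurableSet_Tplus
  have hTm := measurableSet_Tminus
  have hdisj := disjoint_Tplus_Tminus
  have hfU : f.restrict Tplus + f.restrict Tminus = f := by
    rw [← Measure.restrict_union hdisj hTm]
    exact Measure.restrict_eq_self_of_ae_mem (mem_ae_iff.mpr hf_supp)
  have hgU : g.restrict Tplus + g.restrict Tminus = g := by
    rw [← Measure.restrict_union hdisj hTm]
    exact Measure.restrict_eq_self_of_ae_mem (mem_ae_iff.mpr hg_supp)
  apply le_antisymm
  · -- easy direction
    unfold W2sq
    simp only [ENNReal.iInf_add, ENNReal.add_iInf]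
    refine le_iInf fun γp => le_iInf fun h1 => le_iInf fun h2 =>
      le_iInf fun γm => le_iInf fun h3 => le_iInf fun h4 => ?_
    have hfst : (γm + γp).fst = f := by
      rw [Measure.fst_add, h3, h1]
      first
      | exact hfU
      | rw [add_comm]; exact hfU
    have hsnd : (γm + γp).snd = g := by
      rw [Measure.snd_add, h4, h2]
      first
      | exact hgU
      | rw [add_comm]; exact hgU
    exact le_trans (W2sq_le_lintegral f g (γm + γp) hfst hsnd)
      (lintegral_add_measure _ _ _).le
  · -- hard direction
    refine le_iInf fun γ => le_iInf fun h1 => le_iInf fun h2 => ?_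
    have hγuniv : γ univ = 1 := by
      rw [← Measure.fst_univ, h1, measure_univ]
    haveI : IsProbabilityMeasure γ := ⟨hγuniv⟩
    have hUm : MeasurableSet (Tplus ∪ Tminus) := hTp.union hTm
    have h0 : γ (((Tplus ∪ Tminus) ×ˢ (Tplus ∪ Tminus))ᶜ) = 0 := by
      have hsub : ((Tplus ∪ Tminus) ×ˢ (Tplus ∪ Tminus))ᶜ ⊆ ((Tplus ∪ Tminus)ᶜ ×ˢ (univ : Set 𝕋)) ∪ ((univ : Set 𝕋) ×ˢ (Tplus ∪ Tminus)ᶜ) := by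
        rintro ⟨a, b⟩ hab
        simp only [mem_compl_iff, mem_prod, not_and_or] at hab
        rcases hab with h | h
        · exact Or.inl ⟨h, trivial⟩
        · exact Or.inr ⟨trivial, h⟩
      refine measure_mono_null hsub (measure_union_null ?_ ?_)
      · rw [Set.prod_univ, ← Measure.fst_apply hUm.compl, h1]
        exact hf_supp
      · rw [Set.univ_prod, ← Measure.snd_apply hUm.compl, h2]
        exact hg_supp
    -- balance of cross masses
    have hγTN : γ (Tplus ×ˢ (Tplus ∪ Tminus)ᶜ) = 0 := by
      refine measure_mono_null ?_ h0
      rintro ⟨a, b⟩ ⟨ha, hb⟩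
      simp only [mem_compl_iff, mem_prod, not_and_or]
      exact Or.inr hb
    have hγNT : γ ((Tplus ∪ Tminus)ᶜ ×ˢ Tplus) = 0 := by
      refine measure_mono_null ?_ h0
      rintro ⟨a, b⟩ ⟨ha, hb⟩
      simp only [mem_compl_iff, mem_prod, not_and_or]
      exact Or.inl ha
    have e1 : f Tplus = γ (Tplus ×ˢ Tplus) + γ (Tplus ×ˢ Tminus) := by
      rw [← h1, Measure.fst_apply hTp, ← Set.prod_univ]
      have : Tplus ×ˢ (univ : Set 𝕋) = (Tplus ×ˢ Tplus ∪ Tplus ×ˢ Tminus) ∪ Tplus ×ˢ (Tplus ∪ Tminus)ᶜ := by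
        rw [← Set.prod_union, ← Set.prod_union, Set.union_compl_self]
      rw [this, measure_union ?_ (hTp.prod hUm.compl), hγTN, add_zero,
        measure_union (disjoint_prod_right hdisj) (hTp.prod hTm)]
      · exact (disjoint_prod_right (disjoint_compl_right.mono_left le_sup_left)).union_left
          (disjoint_prod_right (disjoint_compl_right.mono_left le_sup_right))
    have e2 : g Tplus = γ (Tplus ×ˢ Tplus) + γ (Tminus ×ˢ Tplus) := by
      rw [← h2, Measure.snd_apply hTp, ← Set.univ_prod]
      have : (univ : Set 𝕋) ×ˢ Tplus = (Tplus ×ˢ Tplus ∪ Tminus ×ˢ Tplus) ∪ (Tplus ∪ Tminus)ᶜ ×ˢ Tplus := by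
        rw [← Set.union_prod, ← Set.union_prod, Set.union_compl_self]
      rw [this, measure_union ?_ (hUm.compl.prod hTp), hγNT, add_zero,
        measure_union (disjoint_prod_left hdisj) (hTm.prod hTp)]
      · exact (disjoint_prod_left (disjoint_compl_right.mono_left le_sup_left)).union_left
          (disjoint_prod_left (disjoint_compl_right.mono_left le_sup_right))
    have hbal : γ (Tplus ×ˢ Tminus) = γ (Tminus ×ˢ Tplus) := by
      have := e1.symm.trans (hplus.trans e2)
      exact (ENNReal.add_right_inj (measure_lt_top γ _).ne).mp this
    -- apply the key lemma twice
    have k1 := key γ Tplus Tminus hTp hTm hdisj h0 hbal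
      (fun x hx y hy => edist_sq_within_plus hx hy)
      (fun x hx y hy => edist_sq_cross hx hy)
    have k2 := key γ Tminus Tplus hTm hTp hdisj.symm
      (by rw [Set.union_comm Tminus Tplus]; exact h0) hbal.symm
      (fun x hx y hy => edist_sq_within_minus hx hy)
      (fun x hx y hy => edist_sq_cross' hx hy)
    rw [h1, h2] at k1 k2
    refine le_trans (add_le_add k1 k2) ?_
    -- sum of the four pieces is at most the total cost
    have hsum : ∫⁻ p in Tplus ×ˢ Tplus, edist p.1 p.2 ^ 2 ∂γ
        + ∫⁻ p in Tplus ×ˢ Tminus, edist p.1 p.2 ^ 2 ∂γ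
        + (∫⁻ p in Tminus ×ˢ Tminus, edist p.1 p.2 ^ 2 ∂γ
          + ∫⁻ p in Tminus ×ˢ Tplus, edist p.1 p.2 ^ 2 ∂γ)
        = ∫⁻ p in (Tplus ×ˢ Tplus ∪ Tplus ×ˢ Tminus)
            ∪ (Tminus ×ˢ Tminus ∪ Tminus ×ˢ Tplus), edist p.1 p.2 ^ 2 ∂γ := by
      rw [lintegral_union ((hTm.prod hTm).union (hTm.prod hTp)) ?_,
        lintegral_union (hTp.prod hTm) (disjoint_prod_right hdisj),
        lintegral_union (hTm.prod hTp) (disjoint_prod_right hdisj.symm)]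
      · refine Disjoint.union_left ?_ ?_ <;> refine Disjoint.union_right ?_ ?_
        · exact disjoint_prod_left hdisj
        · exact disjoint_prod_left hdisj
        · exact disjoint_prod_left hdisj
        · exact disjoint_prod_left hdisj
    rw [hsum]
    exact le_trans (lintegral_mono' Measure.restrict_le_self le_rfl) le_rfl
end
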